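/- Let (α, T, N, B, κ, τ) be a spacelike Frenet curve (with spacelike principal normal) in E₁³ with κ(s) ≠ 0 and τ(s) ≠ 0 for all s and with 1/κ and 1/τ twice differentiable, and define U(s) = (1/κ(s))·T(s) − (1/τ(s))·B(s). If there is a function μ : ℝ → ℝ with U''(s) = μ(s)·N(s) for all s, then (1/κ)'' ≡ 0 and (1/τ)'' ≡ 0, so there exist constants a, b, c, d ∈ ℝ with 1/κ(s) = a·s + b and 1/τ(s) = c·s + d for all s; that is, α is a logarithmic spiral in E₁³. -/

import Mathlib

/-- The Minkowski bilinear form on ℝ³: `⟨x,y⟩ = −x₀y₀ + x₁y₁ + x₂y₂`. -/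
def mink (x y : Fin 3 → ℝ) : ℝ := -(x 0 * y 0) + x 1 * y 1 + x 2 * y 2

private lemma mink_lin (a b c d : ℝ) (T N B x : Fin 3 → ℝ) :
    mink (a • T + b • N - (c • B + d • N)) x
      = a * mink T x + (b - d) * mink N x - c * mink B x := by
  simp only [mink, Pi.add_apply, Pi.sub_apply, Pi.smul_apply, smul_eq_mul]
  ring

private lemma mink_smul (a : ℝ) (x y : Fin 3 → ℝ) :
    mink (a • x) y = a * mink x y := by
  simp only [mink, Pi.smul_apply, smul_eq_mul]; ring

private lemma mink_comm (x y : Fin 3 → ℝ) : mink x y = mink y x := by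
  simp only [mink]; ring

private lemma affine_of_deriv2_zero (f : ℝ → ℝ) (hf : ContDiff ℝ 2 f)
    (h2 : ∀ s, deriv (deriv f) s = 0) :
    ∀ s : ℝ, f s = deriv f 0 * s + f 0 := by
  have hf' : ContDiff ℝ (1 + 1) f := by norm_num; exact hf
  have hdf : Differentiable ℝ (deriv f) :=
    (contDiff_succ_iff_deriv.mp hf').2.2.differentiable one_ne_zero
  have hfd : Differentiable ℝ f := hf.differentiable two_ne_zero
  have hconst : ∀ s : ℝ, deriv f s = deriv f 0 := fun s =>
    is_const_of_deriv_eq_zero hdf h2 s 0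
  set c := deriv f 0 with hc
  have hdiff : Differentiable ℝ (fun s : ℝ => f s - c * s) :=
    fun s => (hfd s).sub ((differentiable_id.const_mul c) s)
  have hdz : ∀ s : ℝ, deriv (fun s : ℝ => f s - c * s) s = 0 := by
    intro s
    have h1 : HasDerivAt (fun s : ℝ => f s - c * s) (deriv f s - c * 1) s :=
      ((hfd s).hasDerivAt).sub ((hasDerivAt_id s).const_mul c)
    rw [h1.deriv, hconst s]; ring
  intro s
  have := is_const_of_deriv_eq_zero hdiff hdz s 0
  simp only [mul_zero, sub_zero] at this
  linarith

/-- For a spacelike Frenet curve (with spacelike principal normal)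
`(α, T, N, B, κ, τ)` in `E₁³` with nonvanishing `κ, τ` and twice differentiable
radii `1/κ`, `1/τ`, if the second derivative of
`U(s) = (1/κ(s))·T(s) − (1/τ(s))·B(s)` is everywhere proportional to the normal
(`U'' = μ·N`), then `(1/κ)'' ≡ 0` and `(1/τ)'' ≡ 0`, so `1/κ` and `1/τ` are
affine functions of arc length: `α` is a logarithmic spiral in `E₁³`. -/
theorem U_geodesic_implies_logarithmic_spiral_spacelike
    (α T N B : ℝ → Fin 3 → ℝ) (κ τ : ℝ → ℝ)
    (hα : ∀ s, HasDerivAt α (T s) s)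
    (hT : ∀ s, HasDerivAt T (κ s • N s) s)
    (hN : ∀ s, HasDerivAt N (-κ s • T s + τ s • B s) s)
    (hB : ∀ s, HasDerivAt B (τ s • N s) s)
    (hTT : ∀ s, mink (T s) (T s) = 1)
    (hNN : ∀ s, mink (N s) (N s) = 1)
    (hBB : ∀ s, mink (B s) (B s) = -1)
    (hTN : ∀ s, mink (T s) (N s) = 0)
    (hTB : ∀ s, mink (T s) (B s) = 0)
    (hNB : ∀ s, mink (N s) (B s) = 0)
    (hκ0 : ∀ s, κ s ≠ 0) (hτ0 : ∀ s, τ s ≠ 0)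
    (hκinv : ContDiff ℝ 2 (fun s : ℝ => (κ s)⁻¹))
    (hτinv : ContDiff ℝ 2 (fun s : ℝ => (τ s)⁻¹))
    (U : ℝ → Fin 3 → ℝ)
    (hU : ∀ s : ℝ, U s = (κ s)⁻¹ • T s - (τ s)⁻¹ • B s)
    (μ : ℝ → ℝ) (hμ : ∀ s : ℝ, deriv (deriv U) s = μ s • N s) :
    (∀ s : ℝ, deriv (deriv (fun u : ℝ => (κ u)⁻¹)) s = 0) ∧
    (∀ s : ℝ, deriv (deriv (fun u : ℝ => (τ u)⁻¹)) s = 0) ∧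
      ∃ a b c d : ℝ, ∀ s : ℝ, (κ s)⁻¹ = a * s + b ∧ (τ s)⁻¹ = c * s + d := by
  set f : ℝ → ℝ := fun s => (κ s)⁻¹ with hf
  set g : ℝ → ℝ := fun s => (τ s)⁻¹ with hg
  have hfd : Differentiable ℝ f := hκinv.differentiable two_ne_zero
  have hgd : Differentiable ℝ g := hτinv.differentiable two_ne_zero
  have hκinv' : ContDiff ℝ (1 + 1) f := by norm_num; exact hκinv
  have hτinv' : ContDiff ℝ (1 + 1) g := by norm_num; exact hτinv
  have hdf : Differentiable ℝ (deriv f) :=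
    (contDiff_succ_iff_deriv.mp hκinv').2.2.differentiable one_ne_zero
  have hdg : Differentiable ℝ (deriv g) :=
    (contDiff_succ_iff_deriv.mp hτinv').2.2.differentiable one_ne_zero
  -- first derivative of U
  have hU1 : ∀ s, HasDerivAt U (deriv f s • T s - deriv g s • B s) s := by
    intro s
    have hUeq : U = fun s => f s • T s - g s • B s := funext hU
    have h1 : HasDerivAt (fun s => f s • T s - g s • B s)
        ((f s • (κ s • N s) + deriv f s • T s)
          - (g s • (τ s • N s) + deriv g s • B s)) s :=
      (((hfd s).hasDerivAt).smul (hT s)).sub (((hgd s).hasDerivAt).smul (hB s))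
    have e1 : f s • (κ s • N s) = N s := by
      rw [smul_smul, hf]; simp [inv_mul_cancel₀ (hκ0 s)]
    have e2 : g s • (τ s • N s) = N s := by
      rw [smul_smul, hg]; simp [inv_mul_cancel₀ (hτ0 s)]
    rw [e1, e2] at h1
    rw [hUeq]
    convert h1 using 1
    abel
  have hdU : deriv U = fun s => deriv f s • T s - deriv g s • B s :=
    funext fun s => (hU1 s).deriv
  -- second derivative of U
  have hU2 : ∀ s, deriv (deriv U) s
      = deriv (deriv f) s • T s + (deriv f s * κ s) • N s
        - (deriv (deriv g) s • B s + (deriv g s * τ s) • N s) := by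
    intro s
    have h1 : HasDerivAt (fun s => deriv f s • T s - deriv g s • B s)
        ((deriv f s • (κ s • N s) + deriv (deriv f) s • T s)
          - (deriv g s • (τ s • N s) + deriv (deriv g) s • B s)) s :=
      (((hdf s).hasDerivAt).smul (hT s)).sub (((hdg s).hasDerivAt).smul (hB s))
    rw [hdU, h1.deriv, smul_smul, smul_smul]
    abel
  -- pair U'' with T and B
  constructor
  · intro s
    have e := (hU2 s).symm.trans (hμ s)
    have := congrArg (fun w => mink w (T s)) e
    simp only [mink_lin, mink_smul] at this
    rw [hTT s, mink_comm (N s) (T s), hTN s, mink_comm (B s) (T s), hTB s] at this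
    simpa using this
  constructor
  · intro s
    have e := (hU2 s).symm.trans (hμ s)
    have := congrArg (fun w => mink w (B s)) e
    simp only [mink_lin, mink_smul] at this
    rw [hBB s, hTB s, hNB s] at this
    simpa using this
  · -- affine conclusion
    have hκ2 : ∀ s, deriv (deriv f) s = 0 := by
      intro s
      have e := (hU2 s).symm.trans (hμ s)
      have := congrArg (fun w => mink w (T s)) e
      simp only [mink_lin, mink_smul] at this
      rw [hTT s, mink_comm (N s) (T s), hTN s, mink_comm (B s) (T s), hTB s] at this
      simpa using this
    have hτ2 : ∀ s, deriv (deriv g) s = 0 := by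
      intro s
      have e := (hU2 s).symm.trans (hμ s)
      have := congrArg (fun w => mink w (B s)) e
      simp only [mink_lin, mink_smul] at this
      rw [hBB s, hTB s, hNB s] at this
      simpa using this
    exact ⟨deriv f 0, f 0, deriv g 0, g 0, fun s =>
      ⟨affine_of_deriv2_zero f hκinv hκ2 s, affine_of_deriv2_zero g hτinv hτ2 s⟩⟩
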